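/- Let M(U, τ) be a special Moufang set with U abelian, τ = μ_e, and a ∈ U^#. Then for all b, c ∈ U: (aτ)·h_{a+b,c} = −2c + (aτ)·h_{b,c}. -/

import Mathlib

variable {U : Type*}

/-- The translation `α_a` on `X = U ∪ {∞}`, where `none` plays the role of the point `∞`
and `some 0` plays the role of the point `0`. -/
def alphaPerm [AddGroup U] (a : U) : Equiv.Perm (Option U) :=
  Equiv.optionCongr (Equiv.addRight a)

/-- The image in `U` of the point `a ∈ U ⊆ X = U ∪ {∞}` under a permutation of `X`
(defaulting to `0` in the degenerate case where the image is `∞`). -/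
def pact [Zero U] (g : Equiv.Perm (Option U)) (a : U) : U := (g (some a)).getD 0

/-- A Moufang set `M(U, τ)` in the algebraic description of De Medts–Segev:
the set is `X = U ∪ {∞}` (modelled by `Option U`), the root group at `∞` is
`U_∞ = {α_a | a ∈ U}`, the root group at `0` is `U_0 = U_∞^τ` (here written with
Lean's left-composition convention, so `α_g^τ = τ * α_g * τ⁻¹`), for `a ≠ 0` the map
`μ a` is the unique element of the double coset `U_0 · α_a · U_0` interchanging
`0` and `∞`, and the Moufang condition holds: conjugation by `μ a` interchanges
the root groups `U_∞` and `U_0`. -/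
structure MoufangSet (U : Type*) [AddGroup U] where
  τ : Equiv.Perm (Option U)
  τ_inf : τ none = some 0
  τ_zero : τ (some 0) = none
  μ : U → Equiv.Perm (Option U)
  μ_mem : ∀ a : U, a ≠ 0 → ∃ g h : U,
    μ a = (τ * alphaPerm g * τ⁻¹) * alphaPerm a * (τ * alphaPerm h * τ⁻¹)
  μ_inf : ∀ a : U, a ≠ 0 → μ a none = some 0
  μ_zero : ∀ a : U, a ≠ 0 → μ a (some 0) = none
  μ_unique : ∀ a : U, a ≠ 0 → ∀ m : Equiv.Perm (Option U),
    (∃ g h : U, m = (τ * alphaPerm g * τ⁻¹) * alphaPerm a * (τ * alphaPerm h * τ⁻¹)) →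
    m none = some 0 → m (some 0) = none → m = μ a
  moufang₁ : ∀ a : U, a ≠ 0 → ∀ b : U, ∃ c : U,
    μ a * alphaPerm b * (μ a)⁻¹ = τ * alphaPerm c * τ⁻¹
  moufang₂ : ∀ a : U, a ≠ 0 → ∀ b : U, ∃ c : U,
    μ a * (τ * alphaPerm b * τ⁻¹) * (μ a)⁻¹ = alphaPerm c

namespace MoufangSet

variable [AddGroup U] (M : MoufangSet U)

/-- The Hua group of `M(U, τ)`: the subgroup generated by the Hua maps `h_a = τ μ_a`
(right-action convention: apply `τ` first, then `μ_a`; with Lean's left-composition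
convention this is `μ_a * τ`). -/
def huaGroup : Subgroup (Equiv.Perm (Option U)) :=
  Subgroup.closure {g | ∃ a : U, a ≠ 0 ∧ g = M.μ a * M.τ}

/-- A Moufang set `M(U, τ)` is special if `(−a)τ = −(aτ)` for all nontrivial `a ∈ U`. -/
def Special : Prop := ∀ a : U, a ≠ 0 → pact M.τ (-a) = -(pact M.τ a)

open Classical in
/-- The Hua map `h_a` of `a ∈ U`, as a map `U → U` (`x ↦ x h_a`, i.e. apply `τ` then
`μ_a` to the point `x`), with `h_0` defined to be the constant zero map. -/
noncomputable def hmap (a x : U) : U := if a = 0 then 0 else pact (M.μ a * M.τ) x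

/-- The endomorphism `h_{a,b} : x ↦ x h_{a+b} − x h_a − x h_b`. -/
noncomputable def hmap₂ (a b x : U) : U := M.hmap (a + b) x - M.hmap a x - M.hmap b x

end MoufangSet

namespace MoufangSet

section Development

variable {U : Type*} [AddCommGroup U]

/- ### Translations -/

theorem alphaPerm_some (a x : U) : alphaPerm a (some x) = some (x + a) := rfl
theorem alphaPerm_none (a : U) : alphaPerm a none = none := rfl

theorem alphaPerm_add (a b : U) : alphaPerm (a + b) = alphaPerm a * alphaPerm b := by
  refine Equiv.ext fun z => ?_
  cases z with
  | none => rfl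
  | some v =>
    show some (v + (a + b)) = (alphaPerm a * alphaPerm b) (some v)
    rw [Equiv.Perm.mul_apply, alphaPerm_some, alphaPerm_some, add_comm a b, add_assoc]

theorem alphaPerm_zero : alphaPerm (0 : U) = 1 := by
  refine Equiv.ext fun z => ?_
  cases z with
  | none => rfl
  | some v => show some (v + 0) = some v; rw [add_zero]

theorem alphaPerm_inv (a : U) : (alphaPerm a)⁻¹ = alphaPerm (-a) := by
  apply inv_eq_of_mul_eq_one_right
  rw [← alphaPerm_add, add_neg_cancel, alphaPerm_zero]

theorem alphaPerm_inj {a b : U} (h : alphaPerm a = alphaPerm b) : a = b := by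
  have := congrArg (fun f : Equiv.Perm (Option U) => f (some (0 : U))) h
  simp only [alphaPerm_some, zero_add, Option.some.injEq] at this
  exact this

variable (M : MoufangSet U)

/- ### Basic values of τ and its inverse -/

theorem tau_inv_none : M.τ⁻¹ none = some 0 := by
  rw [← M.τ_zero, Equiv.Perm.inv_def, Equiv.symm_apply_apply]

theorem tau_inv_zero : M.τ⁻¹ (some 0) = none := by
  rw [← M.τ_inf, Equiv.Perm.inv_def, Equiv.symm_apply_apply]

theorem tau_some {a : U} (ha : a ≠ 0) : M.τ (some a) = some (pact M.τ a) := by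
  cases h : M.τ (some a) with
  | none =>
    exact absurd (M.τ.injective (h.trans M.τ_zero.symm)) (by simpa using ha)
  | some v => simp [pact, h]

theorem pact_tau_ne {a : U} (ha : a ≠ 0) : pact M.τ a ≠ 0 := by
  intro h
  have h1 := tau_some M ha
  rw [h, ← M.τ_inf] at h1
  exact Option.some_ne_none a (M.τ.injective h1)

theorem tau_inv_some {a : U} (ha : a ≠ 0) : M.τ⁻¹ (some a) = some (pact M.τ⁻¹ a) := by
  cases h : M.τ⁻¹ (some a) with
  | none =>
    exact absurd (M.τ⁻¹.injective (h.trans (tau_inv_zero M).symm)) (by simpa using ha)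
  | some v => simp [pact, h]

theorem pact_tau_inv_ne {a : U} (ha : a ≠ 0) : pact M.τ⁻¹ a ≠ 0 := by
  intro h
  have h1 := tau_inv_some M ha
  rw [h, ← tau_inv_none M] at h1
  exact Option.some_ne_none a (M.τ⁻¹.injective h1)

theorem pact_tau_pact_tau_inv {a : U} (ha : a ≠ 0) :
    pact M.τ (pact M.τ⁻¹ a) = a := by
  have h1 : M.τ (some (pact M.τ⁻¹ a)) = some a := by
    rw [← tau_inv_some M ha, Equiv.Perm.inv_def, Equiv.apply_symm_apply]
  have h2 := tau_some M (pact_tau_inv_ne M ha)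
  rw [h1] at h2
  exact Option.some_injective _ h2.symm

theorem pact_tau_inv_neg (hs : M.Special) {a : U} (ha : a ≠ 0) :
    pact M.τ⁻¹ (-a) = -pact M.τ⁻¹ a := by
  set b := pact M.τ⁻¹ a with hb
  have hbne : b ≠ 0 := pact_tau_inv_ne M ha
  have h2 : pact M.τ (-b) = -a := by
    rw [hs b hbne, pact_tau_pact_tau_inv M ha]
  have h3 : M.τ (some (-b)) = some (-a) := by
    rw [tau_some M (neg_ne_zero.mpr hbne), h2]
  have h4 : M.τ⁻¹ (some (-a)) = some (-b) := by
    rw [← h3, Equiv.Perm.inv_def, Equiv.symm_apply_apply]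
  rw [tau_inv_some M (neg_ne_zero.mpr ha)] at h4
  exact (Option.some.injEq _ _).mp h4

/- ### Basic values of μ -/

theorem mu_inv_none {a : U} (ha : a ≠ 0) : (M.μ a)⁻¹ none = some 0 := by
  rw [← M.μ_zero a ha, Equiv.Perm.inv_def, Equiv.symm_apply_apply]

theorem mu_inv_zero {a : U} (ha : a ≠ 0) : (M.μ a)⁻¹ (some 0) = none := by
  rw [← M.μ_inf a ha, Equiv.Perm.inv_def, Equiv.symm_apply_apply]

theorem mu_ne_none {a v : U} (ha : a ≠ 0) (hv : v ≠ 0) : M.μ a (some v) ≠ none := by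
  intro h
  exact hv (by simpa using (M.μ a).injective (h.trans (M.μ_zero a ha).symm))

theorem mu_ne_some_zero {a v : U} (ha : a ≠ 0) : M.μ a (some v) ≠ some 0 := by
  intro h
  exact Option.some_ne_none v ((M.μ a).injective (h.trans (M.μ_inf a ha).symm))

/- ### The explicit formula for μ -/

theorem mu_eq (hs : M.Special) {a : U} (ha : a ≠ 0) :
    M.μ a = (M.τ * alphaPerm (-pact M.τ⁻¹ a) * M.τ⁻¹) * alphaPerm a *
      (M.τ * alphaPerm (-pact M.τ⁻¹ a) * M.τ⁻¹) := by
  obtain ⟨g, h, hgh⟩ := M.μ_mem a ha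
  -- determine g from μ_zero
  have h0 := M.μ_zero a ha
  rw [hgh] at h0
  simp only [Equiv.Perm.mul_apply] at h0
  rw [tau_inv_zero M, alphaPerm_none, M.τ_inf, alphaPerm_some, zero_add,
    tau_inv_some M ha, alphaPerm_some] at h0
  -- h0 : M.τ (some (pact M.τ⁻¹ a + g)) = none
  have hg : g = -pact M.τ⁻¹ a := by
    rw [← M.τ_zero] at h0
    have h1 : pact M.τ⁻¹ a + g = 0 := Option.some_injective _ (M.τ.injective h0)
    exact eq_neg_of_add_eq_zero_right h1
  -- determine h from μ_inf
  have hinf := M.μ_inf a ha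
  rw [hgh] at hinf
  simp only [Equiv.Perm.mul_apply] at hinf
  rw [tau_inv_none M, alphaPerm_some, zero_add] at hinf
  -- hinf : M.τ (αg (M.τ⁻¹ (αa (M.τ (some h))))) = some 0
  rw [← M.τ_inf] at hinf
  have hinf2 : alphaPerm g (M.τ⁻¹ (alphaPerm a (M.τ (some h)))) = none :=
    M.τ.injective hinf
  have hh : h = -pact M.τ⁻¹ a := by
    have h2 : M.τ⁻¹ (alphaPerm a (M.τ (some h))) = none := by
      cases hz : M.τ⁻¹ (alphaPerm a (M.τ (some h))) with
      | none => rfl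
      | some v => rw [hz, alphaPerm_some] at hinf2; exact absurd hinf2 (by simp)
    have h3 : alphaPerm a (M.τ (some h)) = some 0 := by
      rw [← tau_inv_zero M] at h2
      exact M.τ⁻¹.injective h2
    have hh0 : h ≠ 0 := by
      intro h4
      rw [h4, M.τ_zero, alphaPerm_none] at h3
      exact absurd h3 (by simp)
    rw [tau_some M hh0, alphaPerm_some] at h3
    have h5 : pact M.τ h = -a := by
      have := Option.some_injective _ h3
      exact eq_neg_of_add_eq_zero_left this
    have h6 : M.τ (some h) = some (-a) := by rw [tau_some M hh0, h5]
    have h7 : M.τ⁻¹ (some (-a)) = some h := by rw [← h6, Equiv.Perm.inv_def, Equiv.symm_apply_apply]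
    rw [tau_inv_some M (neg_ne_zero.mpr ha), pact_tau_inv_neg M hs ha] at h7
    exact (Option.some_injective _ h7).symm
  rw [hgh, hg, hh]

theorem mu_some_self (hs : M.Special) {a : U} (ha : a ≠ 0) :
    M.μ a (some a) = some (-a) := by
  set w := pact M.τ⁻¹ a with hwdef
  have hw : w ≠ 0 := pact_tau_inv_ne M ha
  have hpw : pact M.τ w = a := pact_tau_pact_tau_inv M ha
  rw [mu_eq M hs ha]
  simp only [Equiv.Perm.mul_apply, ← hwdef]
  rw [tau_inv_some M ha, ← hwdef, alphaPerm_some, add_neg_cancel, M.τ_zero,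
    alphaPerm_none, tau_inv_none M, alphaPerm_some, zero_add,
    tau_some M (neg_ne_zero.mpr hw), hs w hw, hpw]

theorem mu_neg (hs : M.Special) {a : U} (ha : a ≠ 0) :
    M.μ (-a) = (M.μ a)⁻¹ := by
  rw [mu_eq M hs ha, mu_eq M hs (neg_ne_zero.mpr ha), pact_tau_inv_neg M hs ha,
    neg_neg]
  simp only [mul_inv_rev, inv_inv, alphaPerm_inv]
  group

/- ### Hua maps : basic values -/

theorem hmap_zero_idx (x : U) : M.hmap 0 x = 0 := by simp [MoufangSet.hmap]

theorem hmap_zero {a : U} (ha : a ≠ 0) : M.hmap a 0 = 0 := by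
  simp only [MoufangSet.hmap, if_neg ha, pact, Equiv.Perm.mul_apply, M.τ_zero,
    M.μ_inf a ha]
  rfl

theorem hmap_some {a : U} (ha : a ≠ 0) (x : U) :
    M.μ a (M.τ (some x)) = some (M.hmap a x) := by
  by_cases hx : x = 0
  · rw [hx, M.τ_zero, M.μ_inf a ha, hmap_zero M ha]
  · rw [tau_some M hx]
    cases hz : M.μ a (some (pact M.τ x)) with
    | none => exact absurd hz (mu_ne_none M ha (pact_tau_ne M hx))
    | some v =>
      have hh : M.hmap a x = v := by
        unfold MoufangSet.hmap
        rw [if_neg ha]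
        unfold pact
        rw [Equiv.Perm.mul_apply, tau_some M hx, hz]
        rfl
      rw [hh]

theorem hmap_ne_zero {a x : U} (ha : a ≠ 0) (hx : x ≠ 0) : M.hmap a x ≠ 0 := by
  intro h
  have h1 := hmap_some M ha x
  rw [h, tau_some M hx] at h1
  exact mu_ne_some_zero M ha h1

/- ### The conjugation lemma: (μ_a τ) μ_b (μ_a τ)⁻¹ = μ_{b·h_a} -/

theorem mu_conj (hs : M.Special) {e : U} (he : e ≠ 0) (hτ : M.τ = M.μ e)
    {a b : U} (ha : a ≠ 0) (hb : b ≠ 0) :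
    M.μ a * M.τ * M.μ b * M.τ⁻¹ * (M.μ a)⁻¹ = M.μ (M.hmap a b) := by
  set w := pact M.τ⁻¹ b with hwdef
  obtain ⟨u, hu⟩ := M.moufang₂ e he (-w)
  rw [← hτ] at hu
  obtain ⟨v, hv⟩ := M.moufang₁ a ha u
  obtain ⟨y, hy⟩ := M.moufang₂ a ha b
  -- identify y with the Hua image of b
  have hy0 : y = M.hmap a b := by
    have hyy := congrArg (fun f : Equiv.Perm (Option U) => f (some 0)) hy
    simp only [Equiv.Perm.mul_apply] at hyy
    rw [mu_inv_zero M ha, tau_inv_none M, alphaPerm_some, zero_add,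
      hmap_some M ha b, alphaPerm_some, zero_add] at hyy
    exact (Option.some_injective _ hyy).symm
  -- the coset decomposition of the conjugate
  have hm : M.μ a * M.τ * M.μ b * M.τ⁻¹ * (M.μ a)⁻¹ =
      (M.τ * alphaPerm v * M.τ⁻¹) * alphaPerm (M.hmap a b) *
        (M.τ * alphaPerm v * M.τ⁻¹) := by
    have e1 : M.μ a * M.τ * M.μ b * M.τ⁻¹ * (M.μ a)⁻¹ =
        (M.μ a * (M.τ * (M.τ * alphaPerm (-w) * M.τ⁻¹) * M.τ⁻¹) * (M.μ a)⁻¹) *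
          (M.μ a * (M.τ * alphaPerm b * M.τ⁻¹) * (M.μ a)⁻¹) *
          (M.μ a * (M.τ * (M.τ * alphaPerm (-w) * M.τ⁻¹) * M.τ⁻¹) * (M.μ a)⁻¹) := by
      rw [mu_eq M hs hb, ← hwdef]
      group
    rw [e1, hu, hv, hy, hy0]
  -- the swap conditions
  have hmn : (M.μ a * M.τ * M.μ b * M.τ⁻¹ * (M.μ a)⁻¹) none = some 0 := by
    simp only [Equiv.Perm.mul_apply]
    rw [mu_inv_none M ha, tau_inv_zero M, M.μ_inf b hb, M.τ_zero, M.μ_inf a ha]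
  have hmz : (M.μ a * M.τ * M.μ b * M.τ⁻¹ * (M.μ a)⁻¹) (some 0) = none := by
    simp only [Equiv.Perm.mul_apply]
    rw [mu_inv_zero M ha, tau_inv_none M, M.μ_zero b hb, M.τ_inf, M.μ_zero a ha]
  exact M.μ_unique (M.hmap a b) (hmap_ne_zero M ha hb) _ ⟨v, v, hm⟩ hmn hmz

/- ### μ maps are odd -/

theorem mu_neg_apply_aux (hs : M.Special) {e : U} (he : e ≠ 0) (hτ : M.τ = M.μ e)
    {a b : U} (ha : a ≠ 0) (hb : b ≠ 0) :
    M.μ a (some (-(pact M.τ b))) = some (-(M.hmap a b)) := by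
  have hc := mu_conj M hs he hτ ha hb
  have hcc := congrArg (fun f : Equiv.Perm (Option U) => f (some (M.hmap a b))) hc
  simp only [Equiv.Perm.mul_apply] at hcc
  have h1 : (M.μ a)⁻¹ (some (M.hmap a b)) = M.τ (some b) := by
    rw [← hmap_some M ha b, Equiv.Perm.inv_def, Equiv.symm_apply_apply]
  rw [h1, Equiv.Perm.inv_def, Equiv.symm_apply_apply, mu_some_self M hs hb,
    tau_some M (neg_ne_zero.mpr hb), hs b hb,
    mu_some_self M hs (hmap_ne_zero M ha hb)] at hcc
  exact hcc

theorem mu_neg_apply (hs : M.Special) {e : U} (he : e ≠ 0) (hτ : M.τ = M.μ e)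
    {a y z : U} (ha : a ≠ 0) (hy : y ≠ 0) (h : M.μ a (some y) = some z) :
    M.μ a (some (-y)) = some (-z) := by
  set b := pact M.τ⁻¹ y with hbdef
  have hb : b ≠ 0 := pact_tau_inv_ne M hy
  have hby : pact M.τ b = y := pact_tau_pact_tau_inv M hy
  have h3 : M.μ a (some y) = some (M.hmap a b) := by
    rw [← hby, ← tau_some M hb, hmap_some M ha]
  have hz : z = M.hmap a b := Option.some_injective _ (h.symm.trans h3)
  rw [hz, ← hby]
  exact mu_neg_apply_aux M hs he hτ ha hb

/- ### μ maps are involutions, hence τ² = 1 -/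

theorem mu_neg_eq_mu (hs : M.Special) {e : U} (he : e ≠ 0) (hτ : M.τ = M.μ e)
    {a : U} (ha : a ≠ 0) : M.μ (-a) = M.μ a := by
  set ι : Equiv.Perm (Option U) := Equiv.optionCongr (Equiv.neg U) with hι
  have hι_some : ∀ x : U, ι (some x) = some (-x) := fun x => rfl
  have hι_none : ι none = none := rfl
  have hιτ : ι * M.τ = M.τ * ι := by
    refine Equiv.ext fun z => ?_
    simp only [Equiv.Perm.mul_apply]
    cases z with
    | none => rw [hι_none, M.τ_inf, hι_some, neg_zero]
    | some v =>
      by_cases hv : v = 0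
      · rw [hv, hι_some, neg_zero, M.τ_zero, hι_none]
      · rw [hι_some, tau_some M hv, tau_some M (neg_ne_zero.mpr hv), hs v hv,
          hι_some]
  have hιτ' : ι * M.τ⁻¹ = M.τ⁻¹ * ι := by
    calc ι * M.τ⁻¹ = M.τ⁻¹ * (M.τ * ι) * M.τ⁻¹ := by group
      _ = M.τ⁻¹ * (ι * M.τ) * M.τ⁻¹ := by rw [hιτ]
      _ = M.τ⁻¹ * ι := by group
  have hA : ∀ x : U, ι * alphaPerm x * ι = alphaPerm (-x) := by
    intro x
    refine Equiv.ext fun z => ?_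
    simp only [Equiv.Perm.mul_apply]
    cases z with
    | none => rfl
    | some v =>
      rw [hι_some, alphaPerm_some, hι_some, alphaPerm_some, neg_add, neg_neg]
  have hC : ∀ x : U, ι * (M.τ * alphaPerm x * M.τ⁻¹) * ι
      = M.τ * alphaPerm (-x) * M.τ⁻¹ := by
    intro x
    calc ι * (M.τ * alphaPerm x * M.τ⁻¹) * ι
        = (ι * M.τ) * alphaPerm x * (M.τ⁻¹ * ι) := by group
      _ = (M.τ * ι) * alphaPerm x * (ι * M.τ⁻¹) := by rw [hιτ, hιτ']
      _ = M.τ * (ι * alphaPerm x * ι) * M.τ⁻¹ := by group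
      _ = M.τ * alphaPerm (-x) * M.τ⁻¹ := by rw [hA x]
  -- ι conjugates μ_a to μ_{-a}
  have hιι : ι * ι = 1 := by
    refine Equiv.ext fun z => ?_
    cases z with
    | none => rfl
    | some v => show some (- -v) = some v; rw [neg_neg]
  have hstep : ∀ X X' : Equiv.Perm (Option U), ι * X * ι = X' → ι * X = X' * ι := by
    intro X X' h
    rw [← h, mul_assoc (ι * X) ι ι, hιι, mul_one]
  have hconj : ι * M.μ a * ι = M.μ (-a) := by
    rw [mu_eq M hs ha, mu_eq M hs (neg_ne_zero.mpr ha), pact_tau_inv_neg M hs ha,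
      neg_neg]
    set X : Equiv.Perm (Option U) := M.τ * alphaPerm (-pact M.τ⁻¹ a) * M.τ⁻¹ with hX
    set X' : Equiv.Perm (Option U) := M.τ * alphaPerm (pact M.τ⁻¹ a) * M.τ⁻¹ with hX'
    have cX : ι * X = X' * ι := by
      refine hstep X X' ?_
      rw [hX, hX', hC, neg_neg]
    have cA : ι * alphaPerm a = alphaPerm (-a) * ι := hstep _ _ (hA a)
    calc ι * (X * alphaPerm a * X) * ι
        = (ι * X) * alphaPerm a * X * ι := by group
      _ = (X' * ι) * alphaPerm a * X * ι := by rw [cX]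
      _ = X' * (ι * alphaPerm a) * X * ι := by group
      _ = X' * (alphaPerm (-a) * ι) * X * ι := by rw [cA]
      _ = X' * alphaPerm (-a) * (ι * X) * ι := by group
      _ = X' * alphaPerm (-a) * (X' * ι) * ι := by rw [cX]
      _ = X' * alphaPerm (-a) * X' * (ι * ι) := by group
      _ = X' * alphaPerm (-a) * X' := by rw [hιι, mul_one]
  -- ι commutes with μ_a (oddness), pointwise
  have hcomm : ι * M.μ a * ι = M.μ a := by
    refine Equiv.ext fun z => ?_
    simp only [Equiv.Perm.mul_apply]
    cases z with
    | none => rw [hι_none, M.μ_inf a ha, hι_some, neg_zero]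
    | some v =>
      by_cases hv : v = 0
      · rw [hv, hι_some, neg_zero, M.μ_zero a ha, hι_none]
      · cases hz : M.μ a (some v) with
        | none => exact absurd hz (mu_ne_none M ha hv)
        | some zv =>
          rw [hι_some, mu_neg_apply M hs he hτ ha hv hz, hι_some, neg_neg]
  rw [← hconj, hcomm]

theorem mu_sq (hs : M.Special) {e : U} (he : e ≠ 0) (hτ : M.τ = M.μ e)
    {a : U} (ha : a ≠ 0) : M.μ a * M.μ a = 1 := by
  have h1 : (M.μ a)⁻¹ = M.μ a := by
    rw [← mu_neg M hs ha, mu_neg_eq_mu M hs he hτ ha]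
  nth_rewrite 2 [← h1]
  exact mul_inv_cancel (M.μ a)

theorem tau_sq (hs : M.Special) {e : U} (he : e ≠ 0) (hτ : M.τ = M.μ e) :
    M.τ * M.τ = 1 := by
  rw [hτ]; exact mu_sq M hs he hτ he

theorem tau_inv_eq (hs : M.Special) {e : U} (he : e ≠ 0) (hτ : M.τ = M.μ e) :
    M.τ⁻¹ = M.τ :=
  inv_eq_of_mul_eq_one_left (tau_sq M hs he hτ)

/- ### Consequences of τ² = 1 -/

theorem pact_zero : pact M.τ (0 : U) = 0 := by
  simp [pact, M.τ_zero]

theorem pact_pact (hs : M.Special) {e : U} (he : e ≠ 0) (hτ : M.τ = M.μ e)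
    (x : U) : pact M.τ (pact M.τ x) = x := by
  by_cases hx : x = 0
  · rw [hx, pact_zero, pact_zero]
  · have h0 := congrArg (fun f : Equiv.Perm (Option U) => f (some x))
      (tau_sq M hs he hτ)
    simp only [Equiv.Perm.mul_apply, Equiv.Perm.one_apply] at h0
    rw [tau_some M hx, tau_some M (pact_tau_ne M hx)] at h0
    exact Option.some_injective _ h0

theorem pact_inj (hs : M.Special) {e : U} (he : e ≠ 0) (hτ : M.τ = M.μ e)
    {x y : U} (h : pact M.τ x = pact M.τ y) : x = y := by
  have := congrArg (pact M.τ) h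
  rwa [pact_pact M hs he hτ, pact_pact M hs he hτ] at this

/- ### Hua maps are additive -/

theorem conj_C {a : U} (ha : a ≠ 0) (x : U) :
    M.μ a * (M.τ * alphaPerm x * M.τ⁻¹) * (M.μ a)⁻¹ = alphaPerm (M.hmap a x) := by
  by_cases hx : x = 0
  · rw [hx, alphaPerm_zero, hmap_zero M ha, alphaPerm_zero]
    group
  · obtain ⟨c, hc⟩ := M.moufang₂ a ha x
    have hcc := congrArg (fun f : Equiv.Perm (Option U) => f (some 0)) hc
    simp only [Equiv.Perm.mul_apply] at hcc
    rw [mu_inv_zero M ha, tau_inv_none M, alphaPerm_some, zero_add,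
      hmap_some M ha x, alphaPerm_some, zero_add] at hcc
    rw [Option.some_injective _ hcc]
    exact hc

theorem hmap_add (a x y : U) :
    M.hmap a (x + y) = M.hmap a x + M.hmap a y := by
  by_cases ha : a = 0
  · rw [ha, hmap_zero_idx, hmap_zero_idx, hmap_zero_idx, add_zero]
  · apply alphaPerm_inj
    calc alphaPerm (M.hmap a (x + y))
        = M.μ a * (M.τ * alphaPerm (x + y) * M.τ⁻¹) * (M.μ a)⁻¹ :=
          (conj_C M ha (x + y)).symm
      _ = M.μ a * (M.τ * (alphaPerm x * alphaPerm y) * M.τ⁻¹) * (M.μ a)⁻¹ := by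
          rw [alphaPerm_add]
      _ = (M.μ a * (M.τ * alphaPerm x * M.τ⁻¹) * (M.μ a)⁻¹) *
            (M.μ a * (M.τ * alphaPerm y * M.τ⁻¹) * (M.μ a)⁻¹) := by group
      _ = alphaPerm (M.hmap a x) * alphaPerm (M.hmap a y) := by
          rw [conj_C M ha, conj_C M ha]
      _ = alphaPerm (M.hmap a x + M.hmap a y) := (alphaPerm_add _ _).symm

theorem hmap_neg_idx (hs : M.Special) {e : U} (he : e ≠ 0) (hτ : M.τ = M.μ e)
    {d : U} (hd : d ≠ 0) (x : U) : M.hmap (-d) x = M.hmap d x := by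
  simp only [MoufangSet.hmap, if_neg hd, if_neg (neg_ne_zero.mpr hd),
    mu_neg_eq_mu M hs he hτ hd]

theorem hmap_pact_self (hs : M.Special) {e : U} (he : e ≠ 0) (hτ : M.τ = M.μ e)
    {a : U} (ha : a ≠ 0) : M.hmap a (pact M.τ a) = -a := by
  have h1 := hmap_some M ha (pact M.τ a)
  rw [tau_some M (pact_tau_ne M ha), pact_pact M hs he hτ,
    mu_some_self M hs ha] at h1
  exact (Option.some_injective _ h1).symm

/- ### The fundamental evaluation -/

theorem pact_tau_inv (hs : M.Special) {e : U} (he : e ≠ 0) (hτ : M.τ = M.μ e)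
    (x : U) : pact M.τ⁻¹ x = pact M.τ x := by
  rw [tau_inv_eq M hs he hτ]

theorem alpha_factor (hs : M.Special) {e : U} (he : e ≠ 0) (hτ : M.τ = M.μ e)
    {x : U} (hx : x ≠ 0) :
    alphaPerm x = (M.τ * alphaPerm (pact M.τ x) * M.τ⁻¹) * M.μ x *
      (M.τ * alphaPerm (pact M.τ x) * M.τ⁻¹) := by
  have hcc : (M.τ * alphaPerm (pact M.τ x) * M.τ⁻¹) *
      (M.τ * alphaPerm (-pact M.τ x) * M.τ⁻¹) = 1 := by
    calc (M.τ * alphaPerm (pact M.τ x) * M.τ⁻¹) *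
        (M.τ * alphaPerm (-pact M.τ x) * M.τ⁻¹)
        = M.τ * (alphaPerm (pact M.τ x) * alphaPerm (-pact M.τ x)) * M.τ⁻¹ := by
          group
      _ = 1 := by rw [← alphaPerm_add, add_neg_cancel, alphaPerm_zero]; group
  have hcc' : (M.τ * alphaPerm (-pact M.τ x) * M.τ⁻¹) *
      (M.τ * alphaPerm (pact M.τ x) * M.τ⁻¹) = 1 := by
    calc (M.τ * alphaPerm (-pact M.τ x) * M.τ⁻¹) *
        (M.τ * alphaPerm (pact M.τ x) * M.τ⁻¹)
        = M.τ * (alphaPerm (-pact M.τ x) * alphaPerm (pact M.τ x)) * M.τ⁻¹ := by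
          group
      _ = 1 := by rw [← alphaPerm_add, neg_add_cancel, alphaPerm_zero]; group
  rw [mu_eq M hs hx, pact_tau_inv M hs he hτ]
  refine Eq.symm ?_
  calc (M.τ * alphaPerm (pact M.τ x) * M.τ⁻¹) *
      ((M.τ * alphaPerm (-pact M.τ x) * M.τ⁻¹) * alphaPerm x *
        (M.τ * alphaPerm (-pact M.τ x) * M.τ⁻¹)) *
      (M.τ * alphaPerm (pact M.τ x) * M.τ⁻¹)
      = ((M.τ * alphaPerm (pact M.τ x) * M.τ⁻¹) *
          (M.τ * alphaPerm (-pact M.τ x) * M.τ⁻¹)) * alphaPerm x *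
          ((M.τ * alphaPerm (-pact M.τ x) * M.τ⁻¹) *
          (M.τ * alphaPerm (pact M.τ x) * M.τ⁻¹)) := by group
    _ = alphaPerm x := by rw [hcc, hcc', one_mul, mul_one]

/- ### The fundamental identity (V5) -/

theorem hmap_V5b (hs : M.Special) {e : U} (he : e ≠ 0) (hτ : M.τ = M.μ e)
    {x y : U} (hx : x ≠ 0) (hy : y ≠ 0) (hxy : x + y ≠ 0) :
    M.hmap x (pact M.τ (x + y) - pact M.τ x) =
      pact M.τ (pact M.τ x + pact M.τ y) := by
  have hq : pact M.τ y + pact M.τ x ≠ 0 := by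
    intro h
    have h1 : pact M.τ y = -pact M.τ x := eq_neg_of_add_eq_zero_left h
    have h2 : pact M.τ y = pact M.τ (-x) := by rw [hs x hx, h1]
    have h3 : y = -x := pact_inj M hs he hτ h2
    rw [h3, add_neg_cancel] at hxy
    exact hxy rfl
  -- the permutation identity coming from α_{x+y} = α_x α_y
  have hperm : (M.τ * alphaPerm (pact M.τ (x + y)) * M.τ⁻¹) * M.μ (x + y) *
      (M.τ * alphaPerm (pact M.τ (x + y)) * M.τ⁻¹) =
      ((M.τ * alphaPerm (pact M.τ x) * M.τ⁻¹) * M.μ x *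
        (M.τ * alphaPerm (pact M.τ x) * M.τ⁻¹)) *
      ((M.τ * alphaPerm (pact M.τ y) * M.τ⁻¹) * M.μ y *
        (M.τ * alphaPerm (pact M.τ y) * M.τ⁻¹)) := by
    rw [← alpha_factor M hs he hτ hxy, ← alpha_factor M hs he hτ hx,
      ← alpha_factor M hs he hτ hy, ← alphaPerm_add]
  have hev := congrArg (fun f : Equiv.Perm (Option U) => f (some 0)) hperm
  simp only [Equiv.Perm.mul_apply] at hev
  rw [tau_inv_zero M] at hev
  simp only [alphaPerm_none] at hev
  rw [M.τ_inf, M.μ_zero (x + y) hxy, M.μ_zero y hy, tau_inv_none M] at hev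
  simp only [alphaPerm_some, zero_add] at hev
  rw [tau_some M (pact_tau_ne M hxy), pact_pact M hs he hτ (x + y),
    tau_some M (pact_tau_ne M hy), pact_pact M hs he hτ y,
    tau_inv_some M hy, pact_tau_inv M hs he hτ y, alphaPerm_some,
    tau_some M hq] at hev
  have hmx : M.μ x (some (pact M.τ (pact M.τ y + pact M.τ x))) =
      some (M.hmap x (pact M.τ y + pact M.τ x)) := by
    rw [← tau_some M hq]
    exact hmap_some M hx _
  rw [hmx, tau_inv_some M (hmap_ne_zero M hx hq), pact_tau_inv M hs he hτ,
    alphaPerm_some] at hev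
  -- hev : some (x+y) = M.τ (some (pact M.τ H + pact M.τ x))
  have h7 : M.τ (some (pact M.τ (x + y))) = some (x + y) := by
    rw [tau_some M (pact_tau_ne M hxy), pact_pact M hs he hτ (x + y)]
  rw [← h7] at hev
  have h8 : pact M.τ (x + y) =
      pact M.τ (M.hmap x (pact M.τ y + pact M.τ x)) + pact M.τ x :=
    Option.some_injective _ (M.τ.injective hev)
  have h9 : M.hmap x (pact M.τ y + pact M.τ x) =
      pact M.τ (pact M.τ (x + y) - pact M.τ x) := by
    have h9a : pact M.τ (M.hmap x (pact M.τ y + pact M.τ x)) =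
        pact M.τ (x + y) - pact M.τ x := eq_sub_of_add_eq h8.symm
    have := congrArg (pact M.τ) h9a
    rwa [pact_pact M hs he hτ] at this
  -- now apply μ_x once more, using μ_x² = 1
  have hz : pact M.τ (x + y) - pact M.τ x ≠ 0 := by
    intro h
    have h1 : pact M.τ (x + y) = pact M.τ x := by
      have := sub_eq_zero.mp h; exact this
    have h2 : x + y = x := pact_inj M hs he hτ h1
    exact hy (by rwa [add_eq_left] at h2)
  have h10 : M.μ x (M.μ x (M.τ (some (pact M.τ y + pact M.τ x)))) =
      M.τ (some (pact M.τ y + pact M.τ x)) := by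
    have h10a := congrArg
      (fun f : Equiv.Perm (Option U) => f (M.τ (some (pact M.τ y + pact M.τ x))))
      (mu_sq M hs he hτ hx)
    simpa [Equiv.Perm.mul_apply] using h10a
  rw [hmap_some M hx, h9, ← tau_some M hz, hmap_some M hx, tau_some M hq] at h10
  have h11 : M.hmap x (pact M.τ (x + y) - pact M.τ x) =
      pact M.τ (pact M.τ y + pact M.τ x) := Option.some_injective _ h10
  rw [h11, add_comm]

theorem hmap_V5 (hs : M.Special) {e : U} (he : e ≠ 0) (hτ : M.τ = M.μ e)
    {x y : U} (hx : x ≠ 0) (hy : y ≠ 0) (hxy : x + y ≠ 0) :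
    M.hmap x (pact M.τ (x + y)) =
      pact M.τ (pact M.τ x + pact M.τ y) - x := by
  have h1 := hmap_V5b M hs he hτ hx hy hxy
  have h2 : pact M.τ (x + y) = (pact M.τ (x + y) - pact M.τ x) + pact M.τ x := by
    abel
  rw [h2, hmap_add, h1, hmap_pact_self M hs he hτ hx, sub_eq_add_neg]

/- ### The key identity: (aτ)·h_{a,d} = −2d -/

theorem key_identity (hs : M.Special) {e : U} (he : e ≠ 0) (hτ : M.τ = M.μ e)
    {a : U} (ha : a ≠ 0) (d : U) :
    M.hmap (a + d) (pact M.τ a) =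
      M.hmap a (pact M.τ a) + M.hmap d (pact M.τ a) - d - d := by
  by_cases hd : d = 0
  · rw [hd, add_zero, hmap_zero_idx]; abel
  by_cases had : a + d = 0
  · have hda : d = -a := eq_neg_of_add_eq_zero_left (by rwa [add_comm] at had)
    rw [had, hmap_zero_idx, hda, hmap_neg_idx M hs he hτ ha,
      hmap_pact_self M hs he hτ ha]
    abel
  · have h1 := hmap_V5 M hs he hτ (x := a + d) (y := -d) had
      (neg_ne_zero.mpr hd) (by rwa [add_neg_cancel_right])
    rw [add_neg_cancel_right] at h1
    have h2 := hmap_V5 M hs he hτ (x := -d) (y := a + d)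
      (neg_ne_zero.mpr hd) had (by rw [show -d + (a + d) = a by abel]; exact ha)
    rw [show -d + (a + d) = a by abel, hmap_neg_idx M hs he hτ hd,
      add_comm (pact M.τ (-d)) (pact M.τ (a + d))] at h2
    rw [h1, h2, hmap_pact_self M hs he hτ ha]
    abel

end Development

end MoufangSet

/-- Let `M(U, τ)` be a special Moufang set with `U` abelian, `τ = μ_e`,
and `a ∈ U^#`.  Then for all `b, c ∈ U`: `(aτ) · h_{a+b,c} = −2c + (aτ) · h_{b,c}`. -/
theorem stmt_9 [AddCommGroup U] (M : MoufangSet U) (hs : M.Special)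
    (e : U) (he : e ≠ 0) (hτ : M.τ = M.μ e) (a : U) (ha : a ≠ 0) (b c : U) :
    M.hmap₂ (a + b) c (pact M.τ a) = -(2 • c) + M.hmap₂ b c (pact M.τ a) := by
  have K1 := MoufangSet.key_identity M hs he hτ ha (b + c)
  have K2 := MoufangSet.key_identity M hs he hτ ha b
  simp only [MoufangSet.hmap₂]
  rw [show a + b + c = a + (b + c) from add_assoc a b c, K1, K2]
  abel
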